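/- Let R(E₈) = {±e_i ± e_j : 1 ≤ i < j ≤ 8} ∪ {(1/2)∑_{i=1}^{8} ε_i e_i : ε_i ∈ {±1}, ∏_{i=1}^{8} ε_i = 1} ⊂ ℝ⁸, and let R(E₇) = {α ∈ R(E₈) : ⟨α, e₇ + e₈⟩ = 0}. Then the four vectors (1/2)(e₁ − e₂ − e₃ − e₄ − e₅ − e₆ − e₇ + e₈), (1/2)(−e₁ + e₂ + e₃ + e₄ − e₅ − e₆ − e₇ + e₈), (1/2)(−e₁ + e₂ − e₃ − e₄ + e₅ + e₆ − e₇ + e₈), and (1/2)(e₁ − e₂ + e₃ + e₄ + e₅ + e₆ − e₇ + e₈) all belong to R(E₇) and form a strongly orthogonal subset of R(E₇) with 4 elements. -/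

import Mathlib

open RealInnerProductSpace

/-- A subset `S` of a set `R` of vectors is *strongly orthogonal* (relative to
`R`) if `S ⊆ R` and for all distinct `α, β ∈ S` one has `α ≠ -β`,
`α + β ∉ R` and `α - β ∉ R`. -/
def IsStronglyOrthSubset {V : Type*} [AddCommGroup V] (R S : Set V) : Prop :=
  S ⊆ R ∧ S.Pairwise fun α β => α ≠ -β ∧ α + β ∉ R ∧ α - β ∉ R

/-- The `i`-th standard basis vector of `ℝⁿ`, in 1-based indexing. -/
noncomputable def stdVec (n : ℕ) (i : ℕ) : EuclideanSpace ℝ (Fin n) :=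
  (WithLp.equiv 2 (Fin n → ℝ)).symm fun j => if (j : ℕ) + 1 = i then 1 else 0

/-- The root system of type `E₈` in `ℝ⁸`. -/
noncomputable def rootsE8 : Set (EuclideanSpace ℝ (Fin 8)) :=
  {x | ∃ i j : ℕ, 1 ≤ i ∧ i < j ∧ j ≤ 8 ∧
      (x = stdVec 8 i + stdVec 8 j ∨ x = stdVec 8 i - stdVec 8 j ∨
       x = -stdVec 8 i + stdVec 8 j ∨ x = -stdVec 8 i - stdVec 8 j)} ∪
  {x | (∀ i : Fin 8, x i = 1 / 2 ∨ x i = -(1 / 2)) ∧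
      Even (Finset.univ.filter fun i : Fin 8 => x i = -(1 / 2)).card}

/-- The root system of type `E₇`, realized inside `R(E₈)` as the roots
orthogonal to `e₇ + e₈`. -/
noncomputable def rootsE7 : Set (EuclideanSpace ℝ (Fin 8)) :=
  {α ∈ rootsE8 | ⟪α, stdVec 8 7 + stdVec 8 8⟫ = 0}

section Aux

private lemma stdVec_apply (n i : ℕ) (j : Fin n) :
    stdVec n i j = if (j : ℕ) + 1 = i then 1 else 0 := rfl

private lemma fv0 : ((0:Fin 8):ℕ) = 0 := rfl
private lemma fv1 : ((1:Fin 8):ℕ) = 1 := rfl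
private lemma fv2 : ((2:Fin 8):ℕ) = 2 := rfl
private lemma fv3 : ((3:Fin 8):ℕ) = 3 := rfl
private lemma fv4 : ((4:Fin 8):ℕ) = 4 := rfl
private lemma fv5 : ((5:Fin 8):ℕ) = 5 := rfl
private lemma fv6 : ((6:Fin 8):ℕ) = 6 := rfl
private lemma fv7 : ((7:Fin 8):ℕ) = 7 := rfl

noncomputable def w1 : EuclideanSpace ℝ (Fin 8) :=
  (1 / 2 : ℝ) • (stdVec 8 1 - stdVec 8 2 - stdVec 8 3 - stdVec 8 4 -
      stdVec 8 5 - stdVec 8 6 - stdVec 8 7 + stdVec 8 8)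
noncomputable def w2 : EuclideanSpace ℝ (Fin 8) :=
  (1 / 2 : ℝ) • (-stdVec 8 1 + stdVec 8 2 + stdVec 8 3 + stdVec 8 4 -
      stdVec 8 5 - stdVec 8 6 - stdVec 8 7 + stdVec 8 8)
noncomputable def w3 : EuclideanSpace ℝ (Fin 8) :=
  (1 / 2 : ℝ) • (-stdVec 8 1 + stdVec 8 2 - stdVec 8 3 - stdVec 8 4 +
      stdVec 8 5 + stdVec 8 6 - stdVec 8 7 + stdVec 8 8)
noncomputable def w4 : EuclideanSpace ℝ (Fin 8) :=
  (1 / 2 : ℝ) • (stdVec 8 1 - stdVec 8 2 + stdVec 8 3 + stdVec 8 4 +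
      stdVec 8 5 + stdVec 8 6 - stdVec 8 7 + stdVec 8 8)

private lemma w1_apply (j : Fin 8) : w1 j =
    (1/2 : ℝ) * ((if (j:ℕ)+1 = 1 then 1 else 0) - (if (j:ℕ)+1 = 2 then 1 else 0)
      - (if (j:ℕ)+1 = 3 then 1 else 0) - (if (j:ℕ)+1 = 4 then 1 else 0)
      - (if (j:ℕ)+1 = 5 then 1 else 0) - (if (j:ℕ)+1 = 6 then 1 else 0)
      - (if (j:ℕ)+1 = 7 then 1 else 0) + (if (j:ℕ)+1 = 8 then 1 else 0)) := rfl

private lemma w2_apply (j : Fin 8) : w2 j =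
    (1/2 : ℝ) * (-(if (j:ℕ)+1 = 1 then 1 else 0) + (if (j:ℕ)+1 = 2 then 1 else 0)
      + (if (j:ℕ)+1 = 3 then 1 else 0) + (if (j:ℕ)+1 = 4 then 1 else 0)
      - (if (j:ℕ)+1 = 5 then 1 else 0) - (if (j:ℕ)+1 = 6 then 1 else 0)
      - (if (j:ℕ)+1 = 7 then 1 else 0) + (if (j:ℕ)+1 = 8 then 1 else 0)) := rfl

private lemma w3_apply (j : Fin 8) : w3 j =
    (1/2 : ℝ) * (-(if (j:ℕ)+1 = 1 then 1 else 0) + (if (j:ℕ)+1 = 2 then 1 else 0)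
      - (if (j:ℕ)+1 = 3 then 1 else 0) - (if (j:ℕ)+1 = 4 then 1 else 0)
      + (if (j:ℕ)+1 = 5 then 1 else 0) + (if (j:ℕ)+1 = 6 then 1 else 0)
      - (if (j:ℕ)+1 = 7 then 1 else 0) + (if (j:ℕ)+1 = 8 then 1 else 0)) := rfl

private lemma w4_apply (j : Fin 8) : w4 j =
    (1/2 : ℝ) * ((if (j:ℕ)+1 = 1 then 1 else 0) - (if (j:ℕ)+1 = 2 then 1 else 0)
      + (if (j:ℕ)+1 = 3 then 1 else 0) + (if (j:ℕ)+1 = 4 then 1 else 0)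
      + (if (j:ℕ)+1 = 5 then 1 else 0) + (if (j:ℕ)+1 = 6 then 1 else 0)
      - (if (j:ℕ)+1 = 7 then 1 else 0) + (if (j:ℕ)+1 = 8 then 1 else 0)) := rfl

/-- Sum of squares of a standard basis vector. -/
private lemma sumsq_stdVec {i : ℕ} (h1 : 1 ≤ i) (h2 : i ≤ 8) :
    ∑ k : Fin 8, (stdVec 8 i k)^2 = 1 := by
  have key : ∀ k : Fin 8, ((k:ℕ) + 1 = i) ↔ k = ⟨i - 1, by omega⟩ := by
    intro k
    constructor
    · intro h; exact Fin.ext (by simp; omega)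
    · intro h; subst h; simp; omega
  calc ∑ k : Fin 8, (stdVec 8 i k)^2
      = ∑ k : Fin 8, (if k = ⟨i - 1, by omega⟩ then (1:ℝ) else 0) := by
        refine Finset.sum_congr rfl fun k _ => ?_
        simp only [stdVec_apply, key k]
        split_ifs <;> norm_num
    _ = 1 := by simp

private lemma cross_stdVec {i j : ℕ} (hij : i ≠ j) :
    ∑ k : Fin 8, stdVec 8 i k * stdVec 8 j k = 0 := by
  refine Finset.sum_eq_zero fun k _ => ?_
  rw [stdVec_apply, stdVec_apply]
  split_ifs with h h'
  · exact absurd (h ▸ h') (by omega)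
  all_goals ring

private lemma sumsq_comb {i j : ℕ} (h1 : 1 ≤ i) (hij : i < j) (hj : j ≤ 8)
    (ε δ : ℝ) (hε : ε = 1 ∨ ε = -1) (hδ : δ = 1 ∨ δ = -1) :
    ∑ k : Fin 8, (ε * stdVec 8 i k + δ * stdVec 8 j k)^2 = 2 := by
  have hε2 : ε^2 = 1 := by rcases hε with rfl | rfl <;> norm_num
  have hδ2 : δ^2 = 1 := by rcases hδ with rfl | rfl <;> norm_num
  have expand : ∑ k : Fin 8, (ε * stdVec 8 i k + δ * stdVec 8 j k)^2
      = ∑ k : Fin 8, (ε^2 * (stdVec 8 i k)^2 + δ^2 * (stdVec 8 j k)^2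
          + (2*ε*δ) * (stdVec 8 i k * stdVec 8 j k)) := by
    refine Finset.sum_congr rfl fun k _ => ?_; ring
  rw [expand]
  rw [Finset.sum_add_distrib, Finset.sum_add_distrib, ← Finset.mul_sum,
      ← Finset.mul_sum, ← Finset.mul_sum,
      sumsq_stdVec h1 (by omega), sumsq_stdVec (by omega : 1 ≤ j) hj,
      cross_stdVec (by omega : i ≠ j), hε2, hδ2]
  ring

/-- Every root of `E₈` has squared length `2`. -/
private lemma sumsq_of_mem {x : EuclideanSpace ℝ (Fin 8)} (hx : x ∈ rootsE8) :
    ∑ k : Fin 8, (x k)^2 = 2 := by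
  rcases hx with ⟨i, j, h1, hij, hj, hc⟩ | ⟨hcoord, _⟩
  · have base : ∀ ε δ : ℝ, ε = 1 ∨ ε = -1 → δ = 1 ∨ δ = -1 →
        ∑ k : Fin 8, (ε * stdVec 8 i k + δ * stdVec 8 j k)^2 = 2 :=
      fun ε δ hε hδ => sumsq_comb h1 hij hj ε δ hε hδ
    rcases hc with rfl | rfl | rfl | rfl
    · rw [← base 1 1 (Or.inl rfl) (Or.inl rfl)]
      refine Finset.sum_congr rfl fun k _ => ?_
      simp only [PiLp.add_apply]; ring
    · rw [← base 1 (-1) (Or.inl rfl) (Or.inr rfl)]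
      refine Finset.sum_congr rfl fun k _ => ?_
      simp only [PiLp.sub_apply]; ring
    · rw [← base (-1) 1 (Or.inr rfl) (Or.inl rfl)]
      refine Finset.sum_congr rfl fun k _ => ?_
      simp only [PiLp.add_apply, PiLp.neg_apply]; ring
    · rw [← base (-1) (-1) (Or.inr rfl) (Or.inr rfl)]
      refine Finset.sum_congr rfl fun k _ => ?_
      simp only [PiLp.sub_apply, PiLp.neg_apply]; ring
  · have : ∀ k : Fin 8, (x k)^2 = 1/4 := by
      intro k; rcases hcoord k with h | h <;> rw [h] <;> norm_num
    rw [Fin.sum_univ_eight]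
    simp only [this]; norm_num

private lemma not_mem_of_sumsq {x : EuclideanSpace ℝ (Fin 8)}
    (hx : ∑ k : Fin 8, (x k)^2 = 4) : x ∉ rootsE7 := by
  intro h
  have := sumsq_of_mem h.1
  rw [hx] at this
  norm_num at this

private lemma ne_of_coord {a b : EuclideanSpace ℝ (Fin 8)} (k : Fin 8)
    (h : a k ≠ b k) : a ≠ b := fun hab => h (by rw [hab])

private lemma sq_symm (a b : EuclideanSpace ℝ (Fin 8)) :
    ∑ k : Fin 8, ((b - a) k)^2 = ∑ k : Fin 8, ((a - b) k)^2 := by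
  refine Finset.sum_congr rfl fun k _ => ?_
  simp only [PiLp.sub_apply]; ring


private lemma m1 : w1 ∈ rootsE7 := by
  refine ⟨Or.inr ⟨?_, ?_⟩, ?_⟩
  · intro i; fin_cases i <;> norm_num [w1_apply]
  · have hf : (Finset.univ.filter fun i : Fin 8 => w1 i = -(1/2)) =
        ({1,2,3,4,5,6} : Finset (Fin 8)) := by
      ext i
      fin_cases i <;> norm_num [w1_apply, Finset.mem_insert, Finset.mem_filter] <;> decide
    rw [hf]; decide
  · norm_num [PiLp.inner_apply, Fin.sum_univ_eight, w1_apply, PiLp.add_apply,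
      stdVec_apply, fv0, fv1, fv2, fv3, fv4, fv5, fv6, fv7]
    rw [if_neg (show (6 : Fin 8) ≠ 0 by decide), if_neg (show (7 : Fin 8) ≠ 0 by decide)]; norm_num

private lemma m2 : w2 ∈ rootsE7 := by
  refine ⟨Or.inr ⟨?_, ?_⟩, ?_⟩
  · intro i; fin_cases i <;> norm_num [w2_apply]
  · have hf : (Finset.univ.filter fun i : Fin 8 => w2 i = -(1/2)) =
        ({0,4,5,6} : Finset (Fin 8)) := by
      ext i
      fin_cases i <;> norm_num [w2_apply, Finset.mem_insert, Finset.mem_filter] <;> decide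
    rw [hf]; decide
  · norm_num [PiLp.inner_apply, Fin.sum_univ_eight, w2_apply, PiLp.add_apply,
      stdVec_apply, fv0, fv1, fv2, fv3, fv4, fv5, fv6, fv7]
    rw [if_neg (show (6 : Fin 8) ≠ 0 by decide), if_neg (show (7 : Fin 8) ≠ 0 by decide)]; norm_num

private lemma m3 : w3 ∈ rootsE7 := by
  refine ⟨Or.inr ⟨?_, ?_⟩, ?_⟩
  · intro i; fin_cases i <;> norm_num [w3_apply]
  · have hf : (Finset.univ.filter fun i : Fin 8 => w3 i = -(1/2)) =
        ({0,2,3,6} : Finset (Fin 8)) := by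
      ext i
      fin_cases i <;> norm_num [w3_apply, Finset.mem_insert, Finset.mem_filter] <;> decide
    rw [hf]; decide
  · norm_num [PiLp.inner_apply, Fin.sum_univ_eight, w3_apply, PiLp.add_apply,
      stdVec_apply, fv0, fv1, fv2, fv3, fv4, fv5, fv6, fv7]
    rw [if_neg (show (6 : Fin 8) ≠ 0 by decide), if_neg (show (7 : Fin 8) ≠ 0 by decide)]; norm_num

private lemma m4 : w4 ∈ rootsE7 := by
  refine ⟨Or.inr ⟨?_, ?_⟩, ?_⟩
  · intro i; fin_cases i <;> norm_num [w4_apply]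
  · have hf : (Finset.univ.filter fun i : Fin 8 => w4 i = -(1/2)) =
        ({1,6} : Finset (Fin 8)) := by
      ext i
      fin_cases i <;> norm_num [w4_apply, Finset.mem_insert, Finset.mem_filter] <;> decide
    rw [hf]; decide
  · norm_num [PiLp.inner_apply, Fin.sum_univ_eight, w4_apply, PiLp.add_apply,
      stdVec_apply, fv0, fv1, fv2, fv3, fv4, fv5, fv6, fv7]
    rw [if_neg (show (6 : Fin 8) ≠ 0 by decide), if_neg (show (7 : Fin 8) ≠ 0 by decide)]; norm_num

private lemma s12 : ∑ k : Fin 8, ((w1 + w2) k)^2 = 4 := by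
  rw [Fin.sum_univ_eight]
  norm_num [PiLp.add_apply, w1_apply, w2_apply, fv0, fv1, fv2, fv3, fv4, fv5, fv6, fv7]

private lemma d12 : ∑ k : Fin 8, ((w1 - w2) k)^2 = 4 := by
  rw [Fin.sum_univ_eight]
  norm_num [PiLp.sub_apply, w1_apply, w2_apply, fv0, fv1, fv2, fv3, fv4, fv5, fv6, fv7]

private lemma s13 : ∑ k : Fin 8, ((w1 + w3) k)^2 = 4 := by
  rw [Fin.sum_univ_eight]
  norm_num [PiLp.add_apply, w1_apply, w3_apply, fv0, fv1, fv2, fv3, fv4, fv5, fv6, fv7]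

private lemma d13 : ∑ k : Fin 8, ((w1 - w3) k)^2 = 4 := by
  rw [Fin.sum_univ_eight]
  norm_num [PiLp.sub_apply, w1_apply, w3_apply, fv0, fv1, fv2, fv3, fv4, fv5, fv6, fv7]

private lemma s14 : ∑ k : Fin 8, ((w1 + w4) k)^2 = 4 := by
  rw [Fin.sum_univ_eight]
  norm_num [PiLp.add_apply, w1_apply, w4_apply, fv0, fv1, fv2, fv3, fv4, fv5, fv6, fv7]

private lemma d14 : ∑ k : Fin 8, ((w1 - w4) k)^2 = 4 := by
  rw [Fin.sum_univ_eight]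
  norm_num [PiLp.sub_apply, w1_apply, w4_apply, fv0, fv1, fv2, fv3, fv4, fv5, fv6, fv7]

private lemma s23 : ∑ k : Fin 8, ((w2 + w3) k)^2 = 4 := by
  rw [Fin.sum_univ_eight]
  norm_num [PiLp.add_apply, w2_apply, w3_apply, fv0, fv1, fv2, fv3, fv4, fv5, fv6, fv7]

private lemma d23 : ∑ k : Fin 8, ((w2 - w3) k)^2 = 4 := by
  rw [Fin.sum_univ_eight]
  norm_num [PiLp.sub_apply, w2_apply, w3_apply, fv0, fv1, fv2, fv3, fv4, fv5, fv6, fv7]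

private lemma s24 : ∑ k : Fin 8, ((w2 + w4) k)^2 = 4 := by
  rw [Fin.sum_univ_eight]
  norm_num [PiLp.add_apply, w2_apply, w4_apply, fv0, fv1, fv2, fv3, fv4, fv5, fv6, fv7]

private lemma d24 : ∑ k : Fin 8, ((w2 - w4) k)^2 = 4 := by
  rw [Fin.sum_univ_eight]
  norm_num [PiLp.sub_apply, w2_apply, w4_apply, fv0, fv1, fv2, fv3, fv4, fv5, fv6, fv7]

private lemma s34 : ∑ k : Fin 8, ((w3 + w4) k)^2 = 4 := by
  rw [Fin.sum_univ_eight]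
  norm_num [PiLp.add_apply, w3_apply, w4_apply, fv0, fv1, fv2, fv3, fv4, fv5, fv6, fv7]

private lemma d34 : ∑ k : Fin 8, ((w3 - w4) k)^2 = 4 := by
  rw [Fin.sum_univ_eight]
  norm_num [PiLp.sub_apply, w3_apply, w4_apply, fv0, fv1, fv2, fv3, fv4, fv5, fv6, fv7]

private lemma pair' : ∀ a b : EuclideanSpace ℝ (Fin 8),
    (∑ k : Fin 8, ((a + b) k)^2 = 4) → (∑ k : Fin 8, ((a - b) k)^2 = 4) →
    (a + b ∉ rootsE7 ∧ a - b ∉ rootsE7) ∧ (b + a ∉ rootsE7 ∧ b - a ∉ rootsE7) := by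
  intro a b h1 h2
  have hba : b + a = a + b := add_comm _ _
  have h2' : ∑ k : Fin 8, ((b - a) k)^2 = 4 := by rw [sq_symm a b]; exact h2
  exact ⟨⟨not_mem_of_sumsq h1, not_mem_of_sumsq h2⟩,
         ⟨hba ▸ not_mem_of_sumsq h1, not_mem_of_sumsq h2'⟩⟩

private lemma c1 : w1 (6 : Fin 8) = -(1/2) := by norm_num [w1_apply, fv6]
private lemma c2 : w2 (6 : Fin 8) = -(1/2) := by norm_num [w2_apply, fv6]
private lemma c3 : w3 (6 : Fin 8) = -(1/2) := by norm_num [w3_apply, fv6]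
private lemma c4 : w4 (6 : Fin 8) = -(1/2) := by norm_num [w4_apply, fv6]

private lemma neq' : ∀ a b : EuclideanSpace ℝ (Fin 8),
    a (6 : Fin 8) = -(1/2) → b (6 : Fin 8) = -(1/2) → a ≠ -b := by
  intro a b ha hb h
  rw [h, PiLp.neg_apply, hb] at ha
  norm_num at ha

private lemma ne12 : w1 ≠ w2 := ne_of_coord (0 : Fin 8)
  (by norm_num [w1_apply, w2_apply, fv0])
private lemma ne13 : w1 ≠ w3 := ne_of_coord (0 : Fin 8)
  (by norm_num [w1_apply, w3_apply, fv0])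
private lemma ne14 : w1 ≠ w4 := ne_of_coord (2 : Fin 8)
  (by norm_num [w1_apply, w4_apply, fv2])
private lemma ne23 : w2 ≠ w3 := ne_of_coord (2 : Fin 8)
  (by norm_num [w2_apply, w3_apply, fv2])
private lemma ne24 : w2 ≠ w4 := ne_of_coord (0 : Fin 8)
  (by norm_num [w2_apply, w4_apply, fv0])
private lemma ne34 : w3 ≠ w4 := ne_of_coord (0 : Fin 8)
  (by norm_num [w3_apply, w4_apply, fv0])

end Aux

/-- the four half-sum vectors listed below all belong to `R(E₇)`
and form a strongly orthogonal subset of `R(E₇)` with `4` elements. -/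
theorem typeEVI_strongly_orthogonal_system :
    (1 / 2 : ℝ) • (stdVec 8 1 - stdVec 8 2 - stdVec 8 3 - stdVec 8 4 -
      stdVec 8 5 - stdVec 8 6 - stdVec 8 7 + stdVec 8 8) ∈ rootsE7 ∧
    (1 / 2 : ℝ) • (-stdVec 8 1 + stdVec 8 2 + stdVec 8 3 + stdVec 8 4 -
      stdVec 8 5 - stdVec 8 6 - stdVec 8 7 + stdVec 8 8) ∈ rootsE7 ∧
    (1 / 2 : ℝ) • (-stdVec 8 1 + stdVec 8 2 - stdVec 8 3 - stdVec 8 4 +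
      stdVec 8 5 + stdVec 8 6 - stdVec 8 7 + stdVec 8 8) ∈ rootsE7 ∧
    (1 / 2 : ℝ) • (stdVec 8 1 - stdVec 8 2 + stdVec 8 3 + stdVec 8 4 +
      stdVec 8 5 + stdVec 8 6 - stdVec 8 7 + stdVec 8 8) ∈ rootsE7 ∧
    IsStronglyOrthSubset rootsE7
      {(1 / 2 : ℝ) • (stdVec 8 1 - stdVec 8 2 - stdVec 8 3 - stdVec 8 4 -
         stdVec 8 5 - stdVec 8 6 - stdVec 8 7 + stdVec 8 8),
       (1 / 2 : ℝ) • (-stdVec 8 1 + stdVec 8 2 + stdVec 8 3 + stdVec 8 4 -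
         stdVec 8 5 - stdVec 8 6 - stdVec 8 7 + stdVec 8 8),
       (1 / 2 : ℝ) • (-stdVec 8 1 + stdVec 8 2 - stdVec 8 3 - stdVec 8 4 +
         stdVec 8 5 + stdVec 8 6 - stdVec 8 7 + stdVec 8 8),
       (1 / 2 : ℝ) • (stdVec 8 1 - stdVec 8 2 + stdVec 8 3 + stdVec 8 4 +
         stdVec 8 5 + stdVec 8 6 - stdVec 8 7 + stdVec 8 8)} ∧
    ({(1 / 2 : ℝ) • (stdVec 8 1 - stdVec 8 2 - stdVec 8 3 - stdVec 8 4 -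
        stdVec 8 5 - stdVec 8 6 - stdVec 8 7 + stdVec 8 8),
      (1 / 2 : ℝ) • (-stdVec 8 1 + stdVec 8 2 + stdVec 8 3 + stdVec 8 4 -
        stdVec 8 5 - stdVec 8 6 - stdVec 8 7 + stdVec 8 8),
      (1 / 2 : ℝ) • (-stdVec 8 1 + stdVec 8 2 - stdVec 8 3 - stdVec 8 4 +
        stdVec 8 5 + stdVec 8 6 - stdVec 8 7 + stdVec 8 8),
      (1 / 2 : ℝ) • (stdVec 8 1 - stdVec 8 2 + stdVec 8 3 + stdVec 8 4 +
        stdVec 8 5 + stdVec 8 6 - stdVec 8 7 + stdVec 8 8)} :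
      Set (EuclideanSpace ℝ (Fin 8))).ncard = 4 := by
  have P12 := pair' w1 w2 s12 d12
  have P13 := pair' w1 w3 s13 d13
  have P14 := pair' w1 w4 s14 d14
  have P23 := pair' w2 w3 s23 d23
  have P24 := pair' w2 w4 s24 d24
  have P34 := pair' w3 w4 s34 d34
  refine ⟨m1, m2, m3, m4, ⟨?_, ?_⟩, ?_⟩
  · intro x hx
    rcases hx with rfl | rfl | rfl | hx
    · exact m1
    · exact m2
    · exact m3
    · rw [Set.mem_singleton_iff] at hx; subst hx; exact m4
  · intro a ha b hb hab
    simp only [Set.mem_insert_iff, Set.mem_singleton_iff] at ha hb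
    rcases ha with rfl | rfl | rfl | rfl <;> rcases hb with rfl | rfl | rfl | rfl
    · exact absurd rfl hab
    · exact ⟨neq' _ _ c1 c2, P12.1.1, P12.1.2⟩
    · exact ⟨neq' _ _ c1 c3, P13.1.1, P13.1.2⟩
    · exact ⟨neq' _ _ c1 c4, P14.1.1, P14.1.2⟩
    · exact ⟨neq' _ _ c2 c1, P12.2.1, P12.2.2⟩
    · exact absurd rfl hab
    · exact ⟨neq' _ _ c2 c3, P23.1.1, P23.1.2⟩
    · exact ⟨neq' _ _ c2 c4, P24.1.1, P24.1.2⟩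
    · exact ⟨neq' _ _ c3 c1, P13.2.1, P13.2.2⟩
    · exact ⟨neq' _ _ c3 c2, P23.2.1, P23.2.2⟩
    · exact absurd rfl hab
    · exact ⟨neq' _ _ c3 c4, P34.1.1, P34.1.2⟩
    · exact ⟨neq' _ _ c4 c1, P14.2.1, P14.2.2⟩
    · exact ⟨neq' _ _ c4 c2, P24.2.1, P24.2.2⟩
    · exact ⟨neq' _ _ c4 c3, P34.2.1, P34.2.2⟩
    · exact absurd rfl hab
  · show ({w1, w2, w3, w4} : Set (EuclideanSpace ℝ (Fin 8))).ncard = 4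
    rw [Set.ncard_insert_of_notMem (by simp [Set.mem_insert_iff, ne12, ne13, ne14]),
        Set.ncard_insert_of_notMem (by simp [Set.mem_insert_iff, ne23, ne24]),
        Set.ncard_insert_of_notMem (by simp [ne34]),
        Set.ncard_singleton]
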